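/- arXiv:1909.09125 — 2 statements merged into one kernel-verified Lean document; each statement's English description precedes it below -/
import Mathlib

section
/- Let u : ℝ³ → ℝ³ be a divergence-free Schwartz vector field with strain S = (∇u + (∇u)ᵀ)/2, vorticity ω = ∇×u, ω_h = (ω₁, ω₂, 0), and let S_h be the matrix with rows (0,0,S₁₃), (0,0,S₂₃), (−S₁₃,−S₂₃,0). Then for all −1 ≤ α ≤ 0 one has ‖S_h‖_{Ḣ^α} ≤ (1/√2)‖ω_h‖_{Ḣ^α}, where the Ḣ^α norm of S_h is taken entrywise (Frobenius norm). -/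
open MeasureTheory Real SchwartzMap
open scoped FourierTransform ENNReal

noncomputable section

/-- Euclidean three-space. -/
abbrev E3 : Type := EuclideanSpace ℝ (Fin 3)

/-- The `i`-th standard basis vector. -/
def ee (i : Fin 3) : E3 := EuclideanSpace.single i 1

/-- The partial derivative `∂ᵢ f`. -/
def pd (i : Fin 3) (f : E3 → ℝ) : E3 → ℝ := fun x => fderiv ℝ f x (ee i)

/-- The Fourier transform (kernel `e^{-2πi x·ξ}`) of a real-valued function. -/
def ft (f : E3 → ℝ) : E3 → ℂ := 𝓕 (fun x => (f x : ℂ))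

/-- The squared homogeneous Sobolev norm `‖v‖²_{Ḣ^s}` of a vector field,
computed componentwise. -/
def hsV (s : ℝ) (v : Fin 3 → E3 → ℝ) : ℝ :=
  ∫ ξ : E3, (2 * π * ‖ξ‖) ^ (2 * s) * ∑ i, ‖ft (v i) ξ‖ ^ 2

/-- The squared homogeneous Sobolev norm `‖A‖²_{Ḣ^s}` of a matrix field,
computed entrywise (Frobenius norm). -/
def hsM (s : ℝ) (A : Fin 3 → Fin 3 → E3 → ℝ) : ℝ :=
  ∫ ξ : E3, (2 * π * ‖ξ‖) ^ (2 * s) * ∑ i, ∑ j, ‖ft (A i j) ξ‖ ^ 2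

/-- The curl `ω = ∇ × u` of a vector field. -/
def curl (u : Fin 3 → E3 → ℝ) : Fin 3 → E3 → ℝ :=
  ![fun x => pd 1 (u 2) x - pd 2 (u 1) x,
    fun x => pd 2 (u 0) x - pd 0 (u 2) x,
    fun x => pd 0 (u 1) x - pd 1 (u 0) x]

/-- The strain tensor `S = (∇u + (∇u)ᵀ)/2`. -/
def strain (u : Fin 3 → E3 → ℝ) : Fin 3 → Fin 3 → E3 → ℝ :=
  fun i j x => (pd i (u j) x + pd j (u i) x) / 2

/-- complexification of a real Schwartz function -/
def toC (f : 𝓢(E3, ℝ)) : 𝓢(E3, ℂ) where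
  toFun x := (f x : ℂ)
  smooth' := Complex.ofRealCLM.contDiff.comp f.smooth'
  decay' := by
    intro k n
    obtain ⟨C, hC⟩ := f.decay' k n
    refine ⟨C, fun x => ?_⟩
    have h : (fun x => ((f x : ℝ) : ℂ)) = (RCLike.ofRealLI (K := ℂ)) ∘ ⇑f := rfl
    rw [h, (RCLike.ofRealLI (K := ℂ)).norm_iteratedFDeriv_comp_left (f.smooth ⊤).contDiffAt (mod_cast le_top)]
    exact hC x

lemma toC_apply (f : 𝓢(E3, ℝ)) (x : E3) : toC f x = (f x : ℂ) := rfl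

lemma ftIntegrable (f : 𝓢(E3, ℝ)) : Integrable (fun x => (f x : ℂ)) := f.integrable.ofReal

lemma ft_toC (f : 𝓢(E3, ℝ)) : ft ⇑f = ⇑(fourierTransformCLM ℝ (toC f)) := rfl

lemma ft_add (A B : E3 → ℝ) (hA : Integrable (fun x => (A x : ℂ)))
    (hB : Integrable (fun x => (B x : ℂ))) (ξ : E3) :
    ft (fun x => A x + B x) ξ = ft A ξ + ft B ξ := by
  simp only [ft, Real.fourier_eq, Complex.ofReal_add, smul_add]
  exact integral_add ((Real.fourierIntegral_convergent_iff ξ).2 hA)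
    ((Real.fourierIntegral_convergent_iff ξ).2 hB)

lemma ft_sub (A B : E3 → ℝ) (hA : Integrable (fun x => (A x : ℂ)))
    (hB : Integrable (fun x => (B x : ℂ))) (ξ : E3) :
    ft (fun x => A x - B x) ξ = ft A ξ - ft B ξ := by
  simp only [ft, Real.fourier_eq, Complex.ofReal_sub, smul_sub]
  exact integral_sub ((Real.fourierIntegral_convergent_iff ξ).2 hA)
    ((Real.fourierIntegral_convergent_iff ξ).2 hB)

lemma ft_smul (c : ℝ) (A : E3 → ℝ) (ξ : E3) :
    ft (fun x => c * A x) ξ = (c : ℂ) * ft A ξ := by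
  simp only [ft, Real.fourier_eq, Complex.ofReal_mul]
  rw [show (c:ℂ) * ∫ (v : E3), 𝐞 (-inner ℝ v ξ) • ((A v : ℝ):ℂ) = (c:ℂ) • ∫ (v : E3), 𝐞 (-inner ℝ v ξ) • ((A v : ℝ):ℂ) from rfl, ← integral_smul]
  congr 1; ext x
  rw [smul_comm]
  simp [Complex.real_smul]

lemma ft_zero (ξ : E3) : ft (fun _ => 0) ξ = 0 := by
  simp [ft, Real.fourier_eq]

lemma ft_neg (A : E3 → ℝ) (ξ : E3) : ft (fun x => -A x) ξ = - ft A ξ := by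
  have := ft_smul (-1) A ξ
  simpa using this

lemma ft_pd (f : 𝓢(E3, ℝ)) (j : Fin 3) (ξ : E3) :
    ft (pd j ⇑f) ξ = (2 * π * Complex.I * (ξ j : ℂ)) * ft (⇑f) ξ := by
  set g : E3 → ℂ := fun x => (f x : ℂ) with hg
  have hgint : Integrable g := ftIntegrable f
  have hgdiff : Differentiable ℝ g :=
    Complex.ofRealCLM.differentiable.comp f.differentiable
  have hfd : (fderiv ℝ g) = fun x => Complex.ofRealCLM.comp (fderiv ℝ (⇑f) x) := by
    funext x
    exact (Complex.ofRealCLM.hasFDerivAt.comp x (f.differentiableAt.hasFDerivAt)).fderiv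
  have hgd : Integrable (fderiv ℝ g) := by
    rw [hfd]
    exact (ContinuousLinearMap.compL ℝ E3 ℝ ℂ Complex.ofRealCLM).integrable_comp
      (SchwartzMap.fderivCLM ℝ E3 ℝ f).integrable
  have h1 : ft (pd j ⇑f) ξ = 𝓕 (fun x => fderiv ℝ g x (ee j)) ξ := by
    unfold ft pd
    congr 1
    refine congrArg (fun h : E3 → ℂ => 𝓕 h ξ) ?_
    funext x
    rw [hfd]
    rfl
  rw [h1, ← Real.fourier_continuousLinearMap_apply hgd,
    Real.fourier_fderiv hgint hgdiff hgd]
  rw [VectorFourier.fourierSMulRight_apply]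
  have hinner : (-innerSL ℝ) ξ (ee j) = -(ξ j) := by
    simp [ee, real_inner_comm, EuclideanSpace.inner_single_left, EuclideanSpace.inner_single_right]
  rw [hinner]
  push_cast
  simp only [smul_eq_mul, neg_smul, Complex.real_smul, Complex.ofReal_neg]
  ring_nf
  rfl

lemma coord_le (ξ : E3) (j : Fin 3) : |ξ j| ≤ ‖ξ‖ := by
  have h1 : (inner ℝ ξ (ee j) : ℝ) = ξ j := by
    simp [ee, EuclideanSpace.inner_single_right]
  have h2 := abs_real_inner_le_norm ξ (ee j)
  have h3 : ‖ee j‖ = 1 := by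
    simp [ee, EuclideanSpace.norm_single]
  rw [h1, h3, mul_one] at h2
  exact h2

lemma key_ineq (p q r : ℝ) (A B C : ℂ)
    (h : (p : ℂ) * A + (q : ℂ) * B + (r : ℂ) * C = 0) :
    ‖(p : ℂ) * C + (r : ℂ) * A‖ ^ 2 + ‖(q : ℂ) * C + (r : ℂ) * B‖ ^ 2
      ≤ ‖(q : ℂ) * C - (r : ℂ) * B‖ ^ 2 + ‖(r : ℂ) * A - (p : ℂ) * C‖ ^ 2 := by
  have h1 : p * A.re + q * B.re + r * C.re = 0 := by
    have := congrArg Complex.re h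
    simpa using this
  have h2 : p * A.im + q * B.im + r * C.im = 0 := by
    have := congrArg Complex.im h
    simpa using this
  have e : (‖(q : ℂ) * C - (r : ℂ) * B‖ ^ 2 + ‖(r : ℂ) * A - (p : ℂ) * C‖ ^ 2)
      - (‖(p : ℂ) * C + (r : ℂ) * A‖ ^ 2 + ‖(q : ℂ) * C + (r : ℂ) * B‖ ^ 2)
      = 4 * r ^ 2 * (C.re ^ 2 + C.im ^ 2) := by
    simp only [Complex.sq_norm, Complex.normSq_apply,
      Complex.add_re, Complex.add_im, Complex.sub_re, Complex.sub_im,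
      Complex.mul_re, Complex.mul_im, Complex.ofReal_re, Complex.ofReal_im]
    linear_combination (-4 * r * C.re) * h1 + (-4 * r * C.im) * h2
  nlinarith [sq_nonneg r, sq_nonneg C.re, sq_nonneg C.im, sq_nonneg (r * C.re), sq_nonneg (r * C.im)]

lemma schwartz_decay6 (g : 𝓢(E3, ℂ)) :
    ∃ D : ℝ, 0 ≤ D ∧ ∀ ξ : E3, ‖g ξ‖ ≤ D / (1 + ‖ξ‖) ^ 6 := by
  refine ⟨2 ^ 6 * ((Finset.Iic ((6, 0) : ℕ × ℕ)).sup (schwartzSeminormFamily ℝ E3 ℂ)) g,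
    mul_nonneg (by positivity) (apply_nonneg _ _), fun ξ => ?_⟩
  have h := SchwartzMap.one_add_le_sup_seminorm_apply (𝕜 := ℝ) (m := ((6, 0) : ℕ × ℕ))
    (k := 6) (n := 0) le_rfl le_rfl g ξ
  rw [norm_iteratedFDeriv_zero] at h
  rw [le_div_iff₀ (by positivity)]
  calc ‖g ξ‖ * (1 + ‖ξ‖) ^ 6 = (1 + ‖ξ‖) ^ 6 * ‖g ξ‖ := mul_comm _ _
    _ ≤ _ := h

lemma weight_mul_sq_le (α : ℝ) (hα₁ : -1 ≤ α) (hα₂ : α ≤ 0) (ξ : E3) :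
    (2 * π * ‖ξ‖) ^ (2 * α) * ‖ξ‖ ^ 2 ≤ (2 * π) ^ (2 * α) * (1 + ‖ξ‖) ^ 2 := by
  rw [Real.mul_rpow (by positivity) (norm_nonneg ξ), mul_assoc]
  refine mul_le_mul_of_nonneg_left ?_ (Real.rpow_nonneg (by positivity) _)
  rcases eq_or_ne ‖ξ‖ 0 with h | h
  · rw [h]
    simp
  · have hpos : 0 < ‖ξ‖ := lt_of_le_of_ne (norm_nonneg _) (Ne.symm h)
    have h2 : ‖ξ‖ ^ (2 * α) * ‖ξ‖ ^ 2 = ‖ξ‖ ^ (2 * α + 2) := by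
      rw [show ‖ξ‖ ^ (2 : ℕ) = ‖ξ‖ ^ ((2 : ℕ) : ℝ) from (Real.rpow_natCast _ 2).symm,
        ← Real.rpow_add hpos]
      norm_num
    rw [h2]
    calc ‖ξ‖ ^ (2 * α + 2) ≤ (1 + ‖ξ‖) ^ (2 * α + 2) :=
          Real.rpow_le_rpow (norm_nonneg _) (by linarith) (by linarith)
      _ ≤ (1 + ‖ξ‖) ^ ((2 : ℕ) : ℝ) :=
          Real.rpow_le_rpow_of_exponent_le (by linarith [norm_nonneg ξ]) (by push_cast; linarith)
      _ = (1 + ‖ξ‖) ^ 2 := Real.rpow_natCast _ 2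

lemma integrable_inv_pow10 : Integrable (fun ξ : E3 => ((1 + ‖ξ‖) ^ 10)⁻¹) := by
  have h := integrable_one_add_norm (E := E3) (μ := volume) (r := 10)
    (by simp [finrank_euclideanSpace_fin]; norm_num)
  refine h.congr (Filter.Eventually.of_forall fun ξ => ?_)
  show (1 + ‖ξ‖) ^ (-(10:ℝ)) = ((1 + ‖ξ‖) ^ 10)⁻¹
  rw [Real.rpow_neg (by positivity), show ((10 : ℝ)) = ((10 : ℕ) : ℝ) by norm_num,
    Real.rpow_natCast]

set_option maxHeartbeats 1600000 in
/-- For a divergence-free Schwartz vector field `u` with strain `S`, vorticity `ω`,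
`ω_h = (ω₁, ω₂, 0)`, and `S_h` the matrix with rows `(0,0,S₁₃), (0,0,S₂₃), (−S₁₃,−S₂₃,0)`:
for all `−1 ≤ α ≤ 0`, `‖S_h‖_{Ḣ^α} ≤ (1/√2)‖ω_h‖_{Ḣ^α}`. -/
theorem statement2 (u : Fin 3 → 𝓢(E3, ℝ))
    (hdiv : ∀ x : E3, ∑ i, pd i (⇑(u i)) x = 0)
    (α : ℝ) (hα₁ : -1 ≤ α) (hα₂ : α ≤ 0)
    (S : Fin 3 → Fin 3 → E3 → ℝ) (hS : S = strain (fun i => ⇑(u i)))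
    (ω : Fin 3 → E3 → ℝ) (hω : ω = curl (fun i => ⇑(u i)))
    (ωh : Fin 3 → E3 → ℝ) (hωh : ωh = ![ω 0, ω 1, fun _ => 0])
    (Sh : Fin 3 → Fin 3 → E3 → ℝ)
    (hSh : Sh = ![![fun _ => 0, fun _ => 0, S 0 2],
                  ![fun _ => 0, fun _ => 0, S 1 2],
                  ![fun x => -S 0 2 x, fun x => -S 1 2 x, fun _ => 0]]) :
    Real.sqrt (hsM α Sh) ≤ (1 / Real.sqrt 2) * Real.sqrt (hsV α ωh) := by
  have hpd_eq : ∀ (i : Fin 3) (f : 𝓢(E3, ℝ)), pd i ⇑f = ⇑(LineDeriv.lineDerivOp (ee i) f) := by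
    intro i f; funext x; simp [pd, SchwartzMap.lineDerivOp_apply_eq_fderiv]
  have hpdint : ∀ (i : Fin 3) (f : 𝓢(E3, ℝ)), Integrable (fun x => ((pd i ⇑f) x : ℂ)) := by
    intro i f; rw [hpd_eq]; exact ftIntegrable _
  have hpdint2 : ∀ (i j : Fin 3) (f g : 𝓢(E3, ℝ)),
      Integrable (fun x => ((pd i ⇑f x + pd j ⇑g x : ℝ) : ℂ)) := by
    intro i j f g
    have := (hpdint i f).add (hpdint j g)
    exact this.congr (Filter.Eventually.of_forall fun x => by simp)
  set F : Fin 3 → E3 → ℂ := fun i => ft ⇑(u i) with hF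
  -- divergence-free on the Fourier side
  have hdivF : ∀ ξ : E3, (ξ 0 : ℂ) * F 0 ξ + (ξ 1 : ℂ) * F 1 ξ + (ξ 2 : ℂ) * F 2 ξ = 0 := by
    intro ξ
    have h0 : ft (fun x => ∑ i, pd i (⇑(u i)) x) ξ = 0 := by
      have e : (fun x => ∑ i, pd i (⇑(u i)) x) = fun _ => (0 : ℝ) := funext hdiv
      rw [e]; exact ft_zero ξ
    have e : (fun x => ∑ i, pd i (⇑(u i)) x)
        = fun x => (pd 0 ⇑(u 0) x + pd 1 ⇑(u 1) x) + pd 2 ⇑(u 2) x := by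
      funext x; rw [Fin.sum_univ_three]
    rw [e, ft_add _ _ (hpdint2 0 1 (u 0) (u 1)) (hpdint 2 (u 2)),
      ft_add _ _ (hpdint 0 (u 0)) (hpdint 1 (u 1)), ft_pd, ft_pd, ft_pd] at h0
    have h3 : (2 * (π : ℂ) * Complex.I)
        * ((ξ 0 : ℂ) * F 0 ξ + (ξ 1 : ℂ) * F 1 ξ + (ξ 2 : ℂ) * F 2 ξ) = 0 := by
      rw [hF]; push_cast at h0 ⊢; linear_combination h0
    have h2πI : (2 * (π : ℂ) * Complex.I) ≠ 0 := by
      simp [Real.pi_ne_zero, Complex.I_ne_zero, Complex.ofReal_ne_zero]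
    exact (mul_eq_zero.mp h3).resolve_left h2πI
  -- Fourier formulas for the strain entries and vorticity components
  have hS02 : ∀ ξ : E3, ft (S 0 2) ξ
      = (π : ℂ) * Complex.I * ((ξ 0 : ℂ) * F 2 ξ + (ξ 2 : ℂ) * F 0 ξ) := by
    intro ξ
    have e : S 0 2 = fun x => 2⁻¹ * (pd 0 ⇑(u 2) x + pd 2 ⇑(u 0) x) := by
      funext x; rw [hS]; simp [strain]; ring
    rw [e, ft_smul, ft_add _ _ (hpdint 0 (u 2)) (hpdint 2 (u 0)), ft_pd, ft_pd]
    push_cast; ring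
  have hS12 : ∀ ξ : E3, ft (S 1 2) ξ
      = (π : ℂ) * Complex.I * ((ξ 1 : ℂ) * F 2 ξ + (ξ 2 : ℂ) * F 1 ξ) := by
    intro ξ
    have e : S 1 2 = fun x => 2⁻¹ * (pd 1 ⇑(u 2) x + pd 2 ⇑(u 1) x) := by
      funext x; rw [hS]; simp [strain]; ring
    rw [e, ft_smul, ft_add _ _ (hpdint 1 (u 2)) (hpdint 2 (u 1)), ft_pd, ft_pd]
    push_cast; ring
  have hW0 : ∀ ξ : E3, ft (ω 0) ξ
      = 2 * (π : ℂ) * Complex.I * ((ξ 1 : ℂ) * F 2 ξ - (ξ 2 : ℂ) * F 1 ξ) := by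
    intro ξ
    have e : ω 0 = fun x => pd 1 ⇑(u 2) x - pd 2 ⇑(u 1) x := by rw [hω]; rfl
    rw [e, ft_sub _ _ (hpdint 1 (u 2)) (hpdint 2 (u 1)), ft_pd, ft_pd]
    push_cast; ring
  have hW1 : ∀ ξ : E3, ft (ω 1) ξ
      = 2 * (π : ℂ) * Complex.I * ((ξ 2 : ℂ) * F 0 ξ - (ξ 0 : ℂ) * F 2 ξ) := by
    intro ξ
    have e : ω 1 = fun x => pd 2 ⇑(u 0) x - pd 0 ⇑(u 2) x := by rw [hω]; rfl
    rw [e, ft_sub _ _ (hpdint 2 (u 0)) (hpdint 0 (u 2)), ft_pd, ft_pd]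
    push_cast; ring
  -- norm computations
  have npi : ∀ z : ℂ, ‖(π : ℂ) * Complex.I * z‖ ^ 2 = π ^ 2 * ‖z‖ ^ 2 := by
    intro z
    rw [norm_mul, norm_mul, Complex.norm_I, mul_one, Complex.norm_real,
      Real.norm_eq_abs, abs_of_pos pi_pos, mul_pow]
  have n2pi : ∀ z : ℂ, ‖2 * (π : ℂ) * Complex.I * z‖ ^ 2 = 4 * π ^ 2 * ‖z‖ ^ 2 := by
    intro z
    rw [norm_mul, norm_mul, norm_mul, Complex.norm_I, mul_one, Complex.norm_real,
      Real.norm_eq_abs, abs_of_pos pi_pos]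
    norm_num [mul_pow]
  have hωh0 : ωh 0 = ω 0 := by rw [hωh]; rfl
  have hωh1 : ωh 1 = ω 1 := by rw [hωh]; rfl
  have hωh2 : ωh 2 = fun _ => (0 : ℝ) := by rw [hωh]; rfl
  -- pointwise inequality
  have Hpt : ∀ ξ : E3, (2 * π * ‖ξ‖) ^ (2 * α) * ∑ i, ∑ j, ‖ft (Sh i j) ξ‖ ^ 2
      ≤ 2⁻¹ * ((2 * π * ‖ξ‖) ^ (2 * α) * ∑ i, ‖ft (ωh i) ξ‖ ^ 2) := by
    intro ξ
    have hsum1 : ∑ i, ∑ j, ‖ft (Sh i j) ξ‖ ^ 2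
        = 2 * (‖ft (S 0 2) ξ‖ ^ 2 + ‖ft (S 1 2) ξ‖ ^ 2) := by
      rw [hSh]
      rw [Fin.sum_univ_three, Fin.sum_univ_three, Fin.sum_univ_three, Fin.sum_univ_three]
      simp only [Matrix.cons_val_zero, Matrix.cons_val_one, Matrix.head_cons,
        Matrix.cons_val_two, Matrix.tail_cons, ft_zero, norm_zero, ft_neg, norm_neg]
      ring
    have hsum2 : ∑ i, ‖ft (ωh i) ξ‖ ^ 2 = ‖ft (ω 0) ξ‖ ^ 2 + ‖ft (ω 1) ξ‖ ^ 2 := by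
      rw [Fin.sum_univ_three, hωh0, hωh1, hωh2, ft_zero, norm_zero]
      ring
    rw [hsum1, hsum2, hS02 ξ, hS12 ξ, hW0 ξ, hW1 ξ, npi, npi, n2pi, n2pi]
    have key := key_ineq (ξ 0) (ξ 1) (ξ 2) (F 0 ξ) (F 1 ξ) (F 2 ξ) (hdivF ξ)
    have hw : (0 : ℝ) ≤ (2 * π * ‖ξ‖) ^ (2 * α) := Real.rpow_nonneg (by positivity) _
    nlinarith [mul_le_mul_of_nonneg_left key
      (mul_nonneg (mul_nonneg (by norm_num : (0:ℝ) ≤ 2) (sq_nonneg π)) hw)]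
  -- decay of the Fourier transforms of u
  obtain ⟨D0, hD0n, hD0⟩ := schwartz_decay6 (fourierTransformCLM ℝ (toC (u 0)))
  obtain ⟨D1, hD1n, hD1⟩ := schwartz_decay6 (fourierTransformCLM ℝ (toC (u 1)))
  obtain ⟨D2, hD2n, hD2⟩ := schwartz_decay6 (fourierTransformCLM ℝ (toC (u 2)))
  set D : ℝ := D0 + D1 + D2 with hD
  have hDn : 0 ≤ D := by positivity
  have hFle : ∀ (i : Fin 3) (ξ : E3), ‖F i ξ‖ ≤ D / (1 + ‖ξ‖) ^ 6 := by
    intro i ξ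
    have hb : (0:ℝ) < (1 + ‖ξ‖) ^ 6 := by positivity
    fin_cases i
    · refine le_trans (hD0 ξ) ?_
      rw [hD]; gcongr; linarith
    · refine le_trans (hD1 ξ) ?_
      rw [hD]; gcongr; linarith
    · refine le_trans (hD2 ξ) ?_
      rw [hD]; gcongr; linarith
  -- bounds on the vorticity Fourier transforms
  have hWb : ∀ ξ : E3, ‖ft (ωh 0) ξ‖ ≤ 2 * π * ‖ξ‖ * (2 * (D / (1 + ‖ξ‖) ^ 6))
      ∧ ‖ft (ωh 1) ξ‖ ≤ 2 * π * ‖ξ‖ * (2 * (D / (1 + ‖ξ‖) ^ 6)) := by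
    intro ξ
    have h0 : |ξ 0| ≤ ‖ξ‖ := coord_le ξ 0
    have h1 : |ξ 1| ≤ ‖ξ‖ := coord_le ξ 1
    have h2 : |ξ 2| ≤ ‖ξ‖ := coord_le ξ 2
    have hE : (0:ℝ) ≤ D / (1 + ‖ξ‖) ^ 6 := by positivity
    constructor
    · rw [hωh0, hW0 ξ]
      calc ‖2 * (π : ℂ) * Complex.I * ((ξ 1 : ℂ) * F 2 ξ - (ξ 2 : ℂ) * F 1 ξ)‖
          = 2 * π * ‖(ξ 1 : ℂ) * F 2 ξ - (ξ 2 : ℂ) * F 1 ξ‖ := by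
            rw [norm_mul, norm_mul, norm_mul, Complex.norm_I, mul_one, Complex.norm_real,
              Real.norm_eq_abs, abs_of_pos pi_pos]
            norm_num
        _ ≤ 2 * π * (‖(ξ 1 : ℂ) * F 2 ξ‖ + ‖(ξ 2 : ℂ) * F 1 ξ‖) := by
            gcongr; exact norm_sub_le _ _
        _ = 2 * π * (|ξ 1| * ‖F 2 ξ‖ + |ξ 2| * ‖F 1 ξ‖) := by
            rw [norm_mul, norm_mul, Complex.norm_real, Complex.norm_real,
              Real.norm_eq_abs, Real.norm_eq_abs]
        _ ≤ 2 * π * (‖ξ‖ * (D / (1 + ‖ξ‖) ^ 6) + ‖ξ‖ * (D / (1 + ‖ξ‖) ^ 6)) := by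
            gcongr <;> first | exact abs_nonneg _ | assumption | exact hFle _ ξ | exact norm_nonneg _
        _ = 2 * π * ‖ξ‖ * (2 * (D / (1 + ‖ξ‖) ^ 6)) := by ring
    · rw [hωh1, hW1 ξ]
      calc ‖2 * (π : ℂ) * Complex.I * ((ξ 2 : ℂ) * F 0 ξ - (ξ 0 : ℂ) * F 2 ξ)‖
          = 2 * π * ‖(ξ 2 : ℂ) * F 0 ξ - (ξ 0 : ℂ) * F 2 ξ‖ := by
            rw [norm_mul, norm_mul, norm_mul, Complex.norm_I, mul_one, Complex.norm_real,
              Real.norm_eq_abs, abs_of_pos pi_pos]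
            norm_num
        _ ≤ 2 * π * (‖(ξ 2 : ℂ) * F 0 ξ‖ + ‖(ξ 0 : ℂ) * F 2 ξ‖) := by
            gcongr; exact norm_sub_le _ _
        _ = 2 * π * (|ξ 2| * ‖F 0 ξ‖ + |ξ 0| * ‖F 2 ξ‖) := by
            rw [norm_mul, norm_mul, Complex.norm_real, Complex.norm_real,
              Real.norm_eq_abs, Real.norm_eq_abs]
        _ ≤ 2 * π * (‖ξ‖ * (D / (1 + ‖ξ‖) ^ 6) + ‖ξ‖ * (D / (1 + ‖ξ‖) ^ 6)) := by
            gcongr <;> first | exact abs_nonneg _ | assumption | exact hFle _ ξ | exact norm_nonneg _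
        _ = 2 * π * ‖ξ‖ * (2 * (D / (1 + ‖ξ‖) ^ 6)) := by ring
  -- integrability of the ωh integrand
  have hGint : Integrable
      (fun ξ : E3 => (2 * π * ‖ξ‖) ^ (2 * α) * ∑ i, ‖ft (ωh i) ξ‖ ^ 2) := by
    -- measurability
    have hmeas : AEStronglyMeasurable
        (fun ξ : E3 => (2 * π * ‖ξ‖) ^ (2 * α) * ∑ i, ‖ft (ωh i) ξ‖ ^ 2) volume := by
      set W0 : 𝓢(E3, ℝ) := LineDeriv.lineDerivOp (ee 1) (u 2) - LineDeriv.lineDerivOp (ee 2) (u 1) with hW0def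
      set W1 : 𝓢(E3, ℝ) := LineDeriv.lineDerivOp (ee 2) (u 0) - LineDeriv.lineDerivOp (ee 0) (u 2) with hW1def
      have hW0eq : ωh 0 = ⇑W0 := by
        rw [hωh0, hω]
        funext x
        simp [curl, hW0def, SchwartzMap.sub_apply, SchwartzMap.lineDerivOp_apply_eq_fderiv, pd]
      have hW1eq : ωh 1 = ⇑W1 := by
        rw [hωh1, hω]
        funext x
        simp [curl, hW1def, SchwartzMap.sub_apply, SchwartzMap.lineDerivOp_apply_eq_fderiv, pd]
      have e : (fun ξ : E3 => ∑ i, ‖ft (ωh i) ξ‖ ^ 2)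
          = fun ξ : E3 => ‖(fourierTransformCLM ℝ (toC W0)) ξ‖ ^ 2
            + ‖(fourierTransformCLM ℝ (toC W1)) ξ‖ ^ 2 := by
        funext ξ
        rw [Fin.sum_univ_three, hωh2, ft_zero, norm_zero, hW0eq, hW1eq,
          ft_toC W0, ft_toC W1]
        ring
      have m1 : Measurable fun ξ : E3 => (2 * π * ‖ξ‖) ^ (2 * α) :=
        (measurable_norm.const_mul (2 * π)).pow_const (2 * α)
      have m2 : Continuous fun ξ : E3 => ‖(fourierTransformCLM ℝ (toC W0)) ξ‖ ^ 2
          + ‖(fourierTransformCLM ℝ (toC W1)) ξ‖ ^ 2 := by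
        exact (((fourierTransformCLM ℝ (toC W0)).continuous.norm.pow 2).add
          (((fourierTransformCLM ℝ (toC W1)).continuous.norm.pow 2)))
      have : Measurable (fun ξ : E3 => (2 * π * ‖ξ‖) ^ (2 * α) * ∑ i, ‖ft (ωh i) ξ‖ ^ 2) := by
        rw [show (fun ξ : E3 => (2 * π * ‖ξ‖) ^ (2 * α) * ∑ i, ‖ft (ωh i) ξ‖ ^ 2)
          = fun ξ : E3 => (2 * π * ‖ξ‖) ^ (2 * α) *
            (‖(fourierTransformCLM ℝ (toC W0)) ξ‖ ^ 2
              + ‖(fourierTransformCLM ℝ (toC W1)) ξ‖ ^ 2) by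
          funext ξ; rw [← congrFun e ξ]]
        exact m1.mul m2.measurable
      exact this.aestronglyMeasurable
    set K : ℝ := 32 * π ^ 2 * (2 * π) ^ (2 * α) * D ^ 2 with hK
    refine (integrable_inv_pow10.const_mul K).mono' hmeas (Filter.Eventually.of_forall fun ξ => ?_)
    have hb : (0:ℝ) < 1 + ‖ξ‖ := by positivity
    have hw : (0 : ℝ) ≤ (2 * π * ‖ξ‖) ^ (2 * α) := Real.rpow_nonneg (by positivity) _
    have hSum : ∑ i, ‖ft (ωh i) ξ‖ ^ 2
        ≤ 32 * π ^ 2 * (D / (1 + ‖ξ‖) ^ 6) ^ 2 * ‖ξ‖ ^ 2 := by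
      rw [Fin.sum_univ_three, hωh2, ft_zero, norm_zero]
      obtain ⟨b0, b1⟩ := hWb ξ
      have s0 : ‖ft (ωh 0) ξ‖ ^ 2 ≤ (2 * π * ‖ξ‖ * (2 * (D / (1 + ‖ξ‖) ^ 6))) ^ 2 :=
        pow_le_pow_left₀ (norm_nonneg _) b0 2
      have s1 : ‖ft (ωh 1) ξ‖ ^ 2 ≤ (2 * π * ‖ξ‖ * (2 * (D / (1 + ‖ξ‖) ^ 6))) ^ 2 :=
        pow_le_pow_left₀ (norm_nonneg _) b1 2
      nlinarith [s0, s1]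
    have hnn : (0:ℝ) ≤ (2 * π * ‖ξ‖) ^ (2 * α) * ∑ i, ‖ft (ωh i) ξ‖ ^ 2 :=
      mul_nonneg hw (Finset.sum_nonneg fun i _ => sq_nonneg _)
    rw [Real.norm_eq_abs, abs_of_nonneg hnn]
    calc (2 * π * ‖ξ‖) ^ (2 * α) * ∑ i, ‖ft (ωh i) ξ‖ ^ 2
        ≤ (2 * π * ‖ξ‖) ^ (2 * α) * (32 * π ^ 2 * (D / (1 + ‖ξ‖) ^ 6) ^ 2 * ‖ξ‖ ^ 2) :=
          mul_le_mul_of_nonneg_left hSum hw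
      _ = 32 * π ^ 2 * (D / (1 + ‖ξ‖) ^ 6) ^ 2 * ((2 * π * ‖ξ‖) ^ (2 * α) * ‖ξ‖ ^ 2) := by
          ring
      _ ≤ 32 * π ^ 2 * (D / (1 + ‖ξ‖) ^ 6) ^ 2 * ((2 * π) ^ (2 * α) * (1 + ‖ξ‖) ^ 2) :=
          mul_le_mul_of_nonneg_left (weight_mul_sq_le α hα₁ hα₂ ξ) (by positivity)
      _ = K * ((1 + ‖ξ‖) ^ 10)⁻¹ := by
          rw [hK]; field_simp
  -- conclude
  have hmain : hsM α Sh ≤ 2⁻¹ * hsV α ωh := by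
    simp only [hsM, hsV]
    calc (∫ ξ : E3, (2 * π * ‖ξ‖) ^ (2 * α) * ∑ i, ∑ j, ‖ft (Sh i j) ξ‖ ^ 2)
        ≤ ∫ ξ : E3, 2⁻¹ * ((2 * π * ‖ξ‖) ^ (2 * α) * ∑ i, ‖ft (ωh i) ξ‖ ^ 2) := by
          refine integral_mono_of_nonneg (Filter.Eventually.of_forall fun ξ => ?_)
            (hGint.const_mul 2⁻¹) (Filter.Eventually.of_forall Hpt)
          exact mul_nonneg (Real.rpow_nonneg (by positivity) _)
            (Finset.sum_nonneg fun i _ => Finset.sum_nonneg fun j _ => sq_nonneg _)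
      _ = 2⁻¹ * ∫ ξ : E3, (2 * π * ‖ξ‖) ^ (2 * α) * ∑ i, ‖ft (ωh i) ξ‖ ^ 2 :=
          integral_const_mul 2⁻¹ _
  have hVnn : 0 ≤ hsV α ωh := by
    simp only [hsV]
    refine integral_nonneg fun ξ => ?_
    exact mul_nonneg (Real.rpow_nonneg (by positivity) _)
      (Finset.sum_nonneg fun i _ => sq_nonneg _)
  calc Real.sqrt (hsM α Sh) ≤ Real.sqrt (2⁻¹ * hsV α ωh) := Real.sqrt_le_sqrt hmain
    _ = (1 / Real.sqrt 2) * Real.sqrt (hsV α ωh) := by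
        rw [Real.sqrt_mul (by norm_num : (0:ℝ) ≤ 2⁻¹), Real.sqrt_inv, one_div]
end
end

section
/- Let A be a real 3×3 symmetric matrix with trace zero. Then −4 det(A) ≤ (2√6/9) |A|³, where |A| = (Σ_{i,j} A_{ij}²)^{1/2} is the Frobenius norm. -/
noncomputable section

/-- Scalar form: for reals summing to zero, `-4xyz ≤ (2√6/9)(√(x²+y²+z²))³`. -/
lemma scalar4 (x y z : ℝ) (h : x + y + z = 0) :
    -4 * (x * y * z) ≤ (2 * Real.sqrt 6 / 9) * (Real.sqrt (x^2 + y^2 + z^2)) ^ 3 := by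
  have hz : z = -(x + y) := by linarith
  subst hz
  set s : ℝ := Real.sqrt (x^2 + y^2 + (-(x+y))^2) with hs
  have hs0 : 0 ≤ s := Real.sqrt_nonneg _
  have hs2 : s ^ 2 = x^2 + y^2 + (-(x+y))^2 := by
    rw [hs, Real.sq_sqrt]; positivity
  have h6 : Real.sqrt 6 ^ 2 = 6 := Real.sq_sqrt (by norm_num)
  have key : 54 * (x * y * (x + y))^2 ≤ (x^2 + y^2 + (x+y)^2) ^ 3 := by
    nlinarith [sq_nonneg ((x-y)*(x+2*y)*(2*x+y))]
  have hsq : (-4 * (x * y * (-(x+y))))^2 ≤ ((2 * Real.sqrt 6 / 9) * s ^ 3)^2 := by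
    have e : ((2 * Real.sqrt 6 / 9) * s ^ 3)^2 = 4 * (Real.sqrt 6 ^ 2) / 81 * (s^2)^3 := by
      ring
    rw [e, h6, hs2]
    nlinarith [key]
  have hrhs : 0 ≤ (2 * Real.sqrt 6 / 9) * s ^ 3 := by positivity
  nlinarith [hsq, hrhs]

/-- For a real symmetric trace-free 3×3 matrix `A`,
`−4 det(A) ≤ (2√6/9)|A|³` where `|A|` is the Frobenius norm. -/
theorem statement4 (A : Matrix (Fin 3) (Fin 3) ℝ)
    (hsym : A.IsSymm) (htr : A.trace = 0) :
    -4 * A.det ≤ (2 * Real.sqrt 6 / 9) * (Real.sqrt (∑ i, ∑ j, A i j ^ 2)) ^ 3 := by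
  have hA : A.IsHermitian := by
    rw [Matrix.IsHermitian, Matrix.conjTranspose_eq_transpose_of_trivial]; exact hsym
  set lam := hA.eigenvalues with hlam
  set U : Matrix (Fin 3) (Fin 3) ℝ := (hA.eigenvectorUnitary : Matrix (Fin 3) (Fin 3) ℝ) with hU
  set D : Matrix (Fin 3) (Fin 3) ℝ := Matrix.diagonal (RCLike.ofReal ∘ lam) with hD
  have hUU : star U * U = 1 := (Matrix.mem_unitaryGroup_iff').mp hA.eigenvectorUnitary.2
  have hUU' : U * star U = 1 := (Matrix.mem_unitaryGroup_iff).mp hA.eigenvectorUnitary.2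
  have hspec : A = U * D * star U := hA.spectral_theorem
  -- trace is the sum of eigenvalues
  have htr' : lam 0 + lam 1 + lam 2 = 0 := by
    have t1 : Matrix.trace (star U * A * U) = Matrix.trace A := by
      rw [Matrix.trace_mul_cycle, hUU', one_mul]
    rw [show star U * A * U = D from by have := hA.conjStarAlgAut_star_eigenvectorUnitary; rw [Unitary.conjStarAlgAut_apply, Unitary.coe_star, star_star] at this; exact this, Matrix.trace_diagonal] at t1
    simp only [Fin.sum_univ_three, htr, Function.comp] at t1
    simpa using t1
  -- determinant is the product of eigenvalues
  have hdet : A.det = lam 0 * (lam 1 * lam 2) := by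
    have := hA.det_eq_prod_eigenvalues
    simpa [Fin.prod_univ_three, mul_assoc] using this
  -- squared Frobenius norm is the sum of squared eigenvalues
  have hAA : A * A = U * (D * D) * star U := by
    conv_lhs => rw [hspec]
    simp only [mul_assoc]
    rw [← mul_assoc (star U) U, hUU, one_mul]
  have hfro : ∑ i, ∑ j, A i j ^ 2 = lam 0 ^ 2 + lam 1 ^ 2 + lam 2 ^ 2 := by
    have t2 : Matrix.trace (A * A) = Matrix.trace (D * D) := by
      rw [hAA, Matrix.trace_mul_cycle, ← mul_assoc, hUU, one_mul]
    have t3 : Matrix.trace (A * A) = ∑ i, ∑ j, A i j ^ 2 := by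
      simp only [Matrix.trace, Matrix.diag, Matrix.mul_apply]
      refine Finset.sum_congr rfl fun i _ => Finset.sum_congr rfl fun j _ => ?_
      rw [hsym.apply i j, sq]
    rw [← t3, t2, hD, Matrix.diagonal_mul_diagonal, Matrix.trace_diagonal]
    simp [Fin.sum_univ_three, sq]
  rw [hdet, hfro]
  have := scalar4 (lam 0) (lam 1) (lam 2) htr'
  linarith [this]
end
end
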